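/- The Laplace transform of the function t ↦ e^{−bt/2} L_n(bt), where L_n is the n-th Laguerre polynomial and b > 0, equals (p − b/2)^n / (p + b/2)^{n+1} for complex p with Re(p) > −b/2. -/

import Mathlib

open MeasureTheory Complex
open Set Filter
open scoped Topology


lemma intOn (s : ℂ) (hs : 0 < s.re) (n : ℕ) :
    IntegrableOn (fun t : ℝ => (t : ℂ) ^ n * Complex.exp (-(s * t))) (Set.Ioi 0) := by
  have hre : IntegrableOn (fun t : ℝ => t ^ n * Real.exp (-s.re * t)) (Set.Ioi 0) := by
    have h := integrableOn_rpow_mul_exp_neg_mul_rpow (s := (n : ℝ)) (p := 1)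
      (lt_of_lt_of_le neg_one_lt_zero (Nat.cast_nonneg n)) one_pos hs
    refine h.congr_fun (fun x hx => ?_) measurableSet_Ioi
    dsimp only
    rw [Real.rpow_one, Real.rpow_natCast]
  refine Integrable.mono' hre (Continuous.aestronglyMeasurable (by fun_prop)) ?_
  filter_upwards [ae_restrict_mem measurableSet_Ioi] with t ht
  rw [norm_mul, norm_pow, Complex.norm_real, Real.norm_eq_abs, abs_of_pos ht,
    Complex.norm_exp]
  simp [neg_mul]

lemma key_int (s : ℂ) (hs : 0 < s.re) (n : ℕ) :
    ∫ t in Set.Ioi (0 : ℝ), (t : ℂ) ^ n * Complex.exp (-(s * t))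
      = (n.factorial : ℂ) / s ^ (n + 1) := by
  have hs0 : s ≠ 0 := by
    intro h; rw [h] at hs; simp at hs
  have hvderiv : ∀ x : ℝ, HasDerivAt (fun t : ℝ => -Complex.exp (-(s * t)) / s)
      (Complex.exp (-(s * x))) x := by
    intro x
    have h1 : HasDerivAt (fun z : ℂ => -Complex.exp (-(s * z)) / s)
        (Complex.exp (-(s * (x : ℂ)))) (x : ℂ) := by
      have hlin : HasDerivAt (fun z : ℂ => -(s * z)) (-s) (x : ℂ) := by
        have := ((hasDerivAt_id' (x : ℂ)).const_mul s).neg; simp only [mul_one] at this; exact this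
      have := (hlin.cexp.neg).div_const s
      refine this.congr_deriv ?_
      field_simp
    exact h1.comp_ofReal
  have htend : Tendsto (fun t : ℝ => -Complex.exp (-(s * t)) / s) atTop (𝓝 0) := by
    rw [tendsto_zero_iff_norm_tendsto_zero]
    have heq : (fun t : ℝ => ‖-Complex.exp (-(s * t)) / s‖)
        = fun t : ℝ => Real.exp (-s.re * t) / ‖s‖ := by
      funext t
      rw [norm_div, norm_neg, Complex.norm_exp]
      simp [neg_mul]
    rw [heq]
    have : Tendsto (fun t : ℝ => Real.exp (-s.re * t)) atTop (𝓝 0) :=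
      Real.tendsto_exp_atBot.comp (tendsto_id.const_mul_atTop_of_neg (by linarith))
    simpa using this.div_const ‖s‖
  induction n with
  | zero =>
    have h := integral_Ioi_of_hasDerivAt_of_tendsto' (a := (0 : ℝ))
      (f := fun t : ℝ => -Complex.exp (-(s * t)) / s)
      (fun x _ => hvderiv x) ((intOn s hs 0).congr_fun (fun x _ => by simp) measurableSet_Ioi)
      htend
    simp only [pow_zero, one_mul]
    rw [show (fun t : ℝ => Complex.exp (-(s * t))) = fun t : ℝ => Complex.exp (-(s * t)) from rfl] at h
    rw [h]
    simp only [Complex.ofReal_zero, mul_zero, neg_zero, Complex.exp_zero, Nat.factorial_zero,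
      Nat.cast_one, pow_one]
    field_simp
    ring
  | succ n ih =>
    have hIBP := integral_Ioi_mul_deriv_eq_deriv_mul (a := (0 : ℝ))
      (u := fun t : ℝ => (t : ℂ) ^ (n + 1)) (u' := fun t : ℝ => ((n : ℂ) + 1) * (t : ℂ) ^ n)
      (v := fun t : ℝ => -Complex.exp (-(s * t)) / s)
      (v' := fun t : ℝ => Complex.exp (-(s * t)))
      (a' := 0) (b' := 0)
      (fun x _ => by
        have := (hasDerivAt_pow (n + 1) (x : ℂ)).comp_ofReal
        simpa using this)
      (fun x _ => hvderiv x)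
      (by simpa [Pi.mul_def] using intOn s hs (n + 1))
      (by
        have h0 : IntegrableOn (fun x : ℝ => (-((n : ℂ) + 1) / s) * ((x : ℂ) ^ n * Complex.exp (-(s * x)))) (Set.Ioi 0) :=
          (intOn s hs n).const_mul (-((n : ℂ) + 1) / s)
        refine h0.congr_fun (fun x _ => ?_) measurableSet_Ioi
        simp only [Pi.mul_apply]
        ring)
      (by
        have hc : Continuous (fun t : ℝ => (t : ℂ) ^ (n + 1) * (-Complex.exp (-(s * t)) / s)) := by
          fun_prop
        have := hc.tendsto' 0 0 (by simp)
        exact this.mono_left nhdsWithin_le_nhds)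
      (by
        rw [tendsto_zero_iff_norm_tendsto_zero]
        have hg : Tendsto (fun t : ℝ => t ^ ((n : ℝ) + 1) * Real.exp (-s.re * t) / ‖s‖)
            atTop (𝓝 0) := by
          simpa using (tendsto_rpow_mul_exp_neg_mul_atTop_nhds_zero ((n : ℝ) + 1) s.re hs).div_const ‖s‖
        refine squeeze_zero_norm' ?_ hg
        filter_upwards [eventually_ge_atTop (0 : ℝ)] with t ht
        rw [Pi.mul_apply, norm_norm, norm_mul, norm_div, norm_neg, norm_pow,
          Complex.norm_real, Real.norm_eq_abs, _root_.abs_of_nonneg ht,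
          Complex.norm_exp]
        rw [← Real.rpow_natCast t (n + 1)]
        push_cast
        simp [neg_mul, mul_div_assoc])
    rw [hIBP]
    have hmul : ∫ t in Set.Ioi (0 : ℝ), ((n : ℂ) + 1) * (t : ℂ) ^ n * (-Complex.exp (-(s * t)) / s)
        = (-((n : ℂ) + 1) / s) * ∫ t in Set.Ioi (0 : ℝ), (t : ℂ) ^ n * Complex.exp (-(s * t)) := by
      rw [← integral_const_mul]
      refine setIntegral_congr_fun measurableSet_Ioi (fun x _ => ?_)
      ring
    rw [hmul, ih]
    rw [Nat.factorial_succ]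
    push_cast
    field_simp
    ring


/-- The `n`-th Laguerre polynomial, `L_n(x) = ∑_{k=0}^n C(n,k) (−x)^k / k!`. -/
noncomputable def laguerre (n : ℕ) (x : ℂ) : ℂ :=
  ∑ k ∈ Finset.range (n + 1), (n.choose k : ℂ) * (-x) ^ k / (Nat.factorial k : ℂ)

theorem laplace_transform_laguerre (n : ℕ) (b : ℝ) (hb : 0 < b)
    (p : ℂ) (hp : -(b / 2) < p.re) :
    ∫ t in Set.Ioi (0 : ℝ),
        (Real.exp (-b * t / 2) : ℂ) * laguerre n ((b : ℂ) * t) * Complex.exp (-p * t)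
      = (p - b / 2) ^ n / (p + b / 2) ^ (n + 1) := by
  set s : ℂ := p + ((b / 2 : ℝ) : ℂ) with hsdef
  have hsre : 0 < s.re := by
    simp only [hsdef, Complex.add_re, Complex.ofReal_re]
    linarith
  have hs0 : s ≠ 0 := by intro h; rw [h] at hsre; simp at hsre
  have hkey : ∀ t : ℝ,
      (Real.exp (-b * t / 2) : ℂ) * laguerre n ((b : ℂ) * t) * Complex.exp (-p * t)
        = ∑ k ∈ Finset.range (n + 1),
            ((n.choose k : ℂ) * (-(b : ℂ)) ^ k / (k.factorial : ℂ))
              * ((t : ℂ) ^ k * Complex.exp (-(s * t))) := by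
    intro t
    have hexp : (Real.exp (-b * t / 2) : ℂ) * Complex.exp (-p * t)
        = Complex.exp (-(s * t)) := by
      rw [Complex.ofReal_exp, ← Complex.exp_add]
      congr 1
      push_cast [hsdef]
      ring
    rw [laguerre, Finset.mul_sum, Finset.sum_mul]
    refine Finset.sum_congr rfl fun k _ => ?_
    calc (Real.exp (-b * t / 2) : ℂ) * ((n.choose k : ℂ) * (-((b : ℂ) * t)) ^ k / k.factorial)
          * Complex.exp (-p * t)
        = ((n.choose k : ℂ) * (-(b : ℂ)) ^ k / k.factorial) * ((t : ℂ) ^ k *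
            ((Real.exp (-b * t / 2) : ℂ) * Complex.exp (-p * t))) := by ring
      _ = _ := by rw [hexp]
  rw [setIntegral_congr_fun measurableSet_Ioi (fun t _ => hkey t)]
  rw [integral_finset_sum _ (fun k _ => (intOn s hsre k).const_mul _)]
  simp_rw [integral_const_mul, key_int s hsre]
  have hpb1 : p - (b : ℂ) / 2 = s - b := by rw [hsdef]; push_cast; ring
  have hpb2 : p + (b : ℂ) / 2 = s := by rw [hsdef]; push_cast; ring
  rw [hpb1, hpb2]
  have hbin : (s - (b : ℂ)) ^ n
      = ∑ k ∈ Finset.range (n + 1), (-(b : ℂ)) ^ k * s ^ (n - k) * (n.choose k : ℂ) := by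
    rw [show s - (b : ℂ) = -(b : ℂ) + s by ring, add_pow]
  rw [hbin, Finset.sum_div]
  refine Finset.sum_congr rfl fun k hk => ?_
  have hk' : k ≤ n := Finset.mem_range_succ_iff.mp hk
  have hfact : (k.factorial : ℂ) ≠ 0 := Nat.cast_ne_zero.mpr k.factorial_ne_zero
  have hpow : s ^ (n + 1) = s ^ (n - k) * s ^ (k + 1) := by
    rw [← pow_add]; congr 1; omega
  rw [hpow]
  field_simp
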